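/- Let $g_\varepsilon(x) := \varepsilon^{(\log_\varepsilon |x|)^2}$. Then for each coordinate direction $i$ there exists $\varepsilon_0 \in (0,1)$ such that for all $\varepsilon < \varepsilon_0$ and all $x$ with $|x| \geq 1/2$, $|\partial_i g_\varepsilon(x)| \leq 16 (1+|x|)^2 \varepsilon^{-2}$; in particular $(\partial_i g_\varepsilon)$ satisfies a tempered moderateness estimate on $\{|x| \geq 1/2\}$. -/

import Mathlib

open Real

local notation "⟪" x ", " y "⟫" => @inner ℝ _ _ x y

private lemma abs_log_le_aux {t : ℝ} (ht : 1/2 ≤ t) : |Real.log t| ≤ 2 * (1 + t) := by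
  have ht0 : 0 < t := by linarith
  rcases le_or_gt 1 t with h1 | h1
  · have hl0 : 0 ≤ Real.log t := Real.log_nonneg h1
    have := Real.log_le_sub_one_of_pos ht0
    rw [abs_of_nonneg hl0]; linarith
  · have hl0 : Real.log t ≤ 0 := Real.log_nonpos (le_of_lt ht0) h1.le
    have hinv : Real.log t⁻¹ ≤ t⁻¹ - 1 := Real.log_le_sub_one_of_pos (by positivity)
    have hinv2 : t⁻¹ ≤ 2 := by
      rw [inv_le_comm₀ ht0 (by norm_num)]; linarith
    rw [abs_of_nonpos hl0]
    rw [Real.log_inv] at hinv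
    linarith

set_option maxHeartbeats 1000000 in
/-- For `g_ε(x) = ε^((log_ε |x|)^2)` there is `ε₀ ∈ (0,1)` such
that for all `ε < ε₀` and all `|x| ≥ 1/2`,
`|∂ᵢ g_ε(x)| ≤ 16 (1+|x|)² ε^{-2}` (a tempered moderateness estimate). -/
theorem stmt4 (d : ℕ) (i : Fin d) :
    ∃ ε₀ ∈ Set.Ioo (0:ℝ) 1, ∀ ε : ℝ, 0 < ε → ε < ε₀ →
      ∀ x : EuclideanSpace ℝ (Fin d), 1/2 ≤ ‖x‖ →
        |fderiv ℝ (fun y : EuclideanSpace ℝ (Fin d) =>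
            ε ^ ((Real.log ‖y‖ / Real.log ε)^2)) x (EuclideanSpace.single i 1)|
          ≤ 16 * (1 + ‖x‖)^2 * ε ^ (-(2:ℝ)) := by
  refine ⟨Real.exp (-1), ⟨Real.exp_pos _, by
    rw [Real.exp_lt_one_iff]; norm_num⟩, ?_⟩
  intro ε hε hεlt x hx
  have hx0 : (0:ℝ) < ‖x‖ := by linarith
  have hlogε : Real.log ε < -1 := by
    have := Real.log_lt_log hε hεlt
    rwa [Real.log_exp] at this
  have hlogεne : Real.log ε ≠ 0 := by linarith
  -- rewrite the function
  have hfun : (fun y : EuclideanSpace ℝ (Fin d) =>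
      ε ^ ((Real.log ‖y‖ / Real.log ε)^2)) =
      fun y : EuclideanSpace ℝ (Fin d) =>
        Real.exp ((4 * Real.log ε)⁻¹ * (Real.log ⟪y, y⟫ * Real.log ⟪y, y⟫)) := by
    funext y
    rw [Real.rpow_def_of_pos hε, real_inner_self_eq_norm_sq, Real.log_pow]
    push_cast
    congr 1
    field_simp
    ring
  rw [hfun]
  -- compute the derivative
  have hqx : ⟪x, x⟫ ≠ 0 := by
    rw [real_inner_self_eq_norm_sq]; positivity
  have hq : HasFDerivAt (fun y : EuclideanSpace ℝ (Fin d) => ⟪y, y⟫)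
      ((fderivInnerCLM ℝ (x, x)).comp
        ((ContinuousLinearMap.id ℝ _).prod (ContinuousLinearMap.id ℝ _))) x :=
    (hasFDerivAt_id x).inner ℝ (hasFDerivAt_id x)
  have h1 := hq.log hqx
  have h2 := h1.mul h1
  have h3 := h2.const_mul ((4 * Real.log ε)⁻¹)
  have h4 := h3.exp
  rw [HasFDerivAt.fderiv (f := fun y : EuclideanSpace ℝ (Fin d) =>
    Real.exp ((4 * Real.log ε)⁻¹ * (Real.log ⟪y, y⟫ * Real.log ⟪y, y⟫))) h4]
  simp only [Pi.mul_apply]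
  -- evaluate the derivative at the basis vector
  have hval : ⟪x, EuclideanSpace.single i (1:ℝ)⟫ = x i := by
    simp [EuclideanSpace.inner_single_right]
  have hval' : ⟪EuclideanSpace.single i (1:ℝ), x⟫ = x i := by
    simp [EuclideanSpace.inner_single_left]
  have happ : (Real.exp ((4 * Real.log ε)⁻¹ * (Real.log ⟪x, x⟫ * Real.log ⟪x, x⟫)) •
      ((4 * Real.log ε)⁻¹ • (Real.log ⟪x, x⟫ • ((⟪x, x⟫)⁻¹ •
        ((fderivInnerCLM ℝ (x, x)).comp
          ((ContinuousLinearMap.id ℝ _).prod (ContinuousLinearMap.id ℝ _)))) +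
        Real.log ⟪x, x⟫ • ((⟪x, x⟫)⁻¹ •
        ((fderivInnerCLM ℝ (x, x)).comp
          ((ContinuousLinearMap.id ℝ _).prod (ContinuousLinearMap.id ℝ _)))))))
        (EuclideanSpace.single i (1:ℝ)) =
      Real.exp ((4 * Real.log ε)⁻¹ * (Real.log ⟪x, x⟫ * Real.log ⟪x, x⟫)) *
        ((4 * Real.log ε)⁻¹ * (2 * (Real.log ⟪x, x⟫ * ((⟪x, x⟫)⁻¹ * (2 * x i))))) := by
    simp [ContinuousLinearMap.smul_apply, ContinuousLinearMap.add_apply,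
      ContinuousLinearMap.comp_apply, ContinuousLinearMap.prod_apply,
      fderivInnerCLM_apply, hval, hval']
    ring
  rw [happ]
  clear happ h4 h3 h2 h1 hq hfun hqx hval hval'
  -- now bound everything
  set t := ‖x‖ with ht
  have hQ : ⟪x, x⟫ = t^2 := real_inner_self_eq_norm_sq x
  have hlogQ : Real.log ⟪x, x⟫ = 2 * Real.log t := by
    rw [hQ, Real.log_pow]; norm_num
  have hxi : |x i| ≤ t := by
    have hval : ⟪x, EuclideanSpace.single i (1:ℝ)⟫ = x i := by
      simp [EuclideanSpace.inner_single_right]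
    rw [← hval]
    calc |⟪x, EuclideanSpace.single i (1:ℝ)⟫| ≤ ‖x‖ * ‖EuclideanSpace.single i (1:ℝ)‖ :=
          abs_real_inner_le_norm _ _
    _ = t := by rw [EuclideanSpace.norm_single]; simp [ht]
  have hlogt : |Real.log t| ≤ 2 * (1 + t) := abs_log_le_aux hx
  have habslogε : 1 ≤ |Real.log ε| := by
    rw [abs_of_neg (by linarith)]; linarith
  rw [hlogQ, hQ]
  set a := x i with ha
  set l := Real.log t with hl
  set L := Real.log ε with hL
  have hεpow : (1:ℝ) ≤ ε ^ (-(2:ℝ)) := by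
    apply Real.one_le_rpow_of_pos_of_le_one_of_nonpos hε
    · have : Real.exp (-1) < 1 := by rw [Real.exp_lt_one_iff]; norm_num
      linarith
    · norm_num
  have hE0 : 0 < Real.exp ((4*L)⁻¹ * (2*l*(2*l))) := Real.exp_pos _
  have hE1 : Real.exp ((4*L)⁻¹ * (2*l*(2*l))) ≤ 1 := by
    rw [Real.exp_le_one_iff]
    have h1 : (4*L)⁻¹ ≤ 0 := inv_nonpos.mpr (by nlinarith)
    exact mul_nonpos_of_nonpos_of_nonneg h1 (mul_self_nonneg (2*l))
  have htabs : |t| = t := abs_of_pos hx0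
  have hLabs : |(4*L)⁻¹| ≤ 4⁻¹ := by
    rw [abs_inv, abs_mul]
    apply inv_anti₀ (by norm_num)
    calc (4:ℝ) = 4 * 1 := by norm_num
    _ ≤ |(4:ℝ)| * |L| := by
          rw [abs_of_pos (by norm_num : (0:ℝ) < 4)]
          nlinarith
  have hinv2 : t⁻¹ ≤ 2 := by
    rw [inv_le_comm₀ hx0 (by norm_num)]; linarith
  have key : |Real.exp ((4*L)⁻¹ * (2*l*(2*l))) *
      ((4*L)⁻¹ * (2 * (2*l * ((t^2)⁻¹ * (2*a)))))| ≤ 8 * (1 + t) := by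
    have heq : |Real.exp ((4*L)⁻¹ * (2*l*(2*l))) *
        ((4*L)⁻¹ * (2 * (2*l * ((t^2)⁻¹ * (2*a)))))| =
        Real.exp ((4*L)⁻¹ * (2*l*(2*l))) *
          (|(4*L)⁻¹| * (2 * ((2*|l|) * ((t^2)⁻¹ * (2*|a|))))) := by
      simp only [abs_mul, abs_two, abs_inv, abs_pow, htabs, abs_of_pos hE0]
    rw [heq]
    have step1 : Real.exp ((4*L)⁻¹ * (2*l*(2*l))) *
          (|(4*L)⁻¹| * (2 * ((2*|l|) * ((t^2)⁻¹ * (2*|a|))))) ≤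
        1 * (4⁻¹ * (2 * ((2*(2*(1+t))) * ((t^2)⁻¹ * (2*t))))) := by
      gcongr
    refine le_trans step1 ?_
    have heq2 : 1 * (4⁻¹ * (2 * ((2*(2*(1+t))) * ((t^2)⁻¹ * (2*t))))) =
        4 * (1+t) * t⁻¹ := by
      field_simp
      ring
    rw [heq2]
    nlinarith
  refine le_trans key ?_
  nlinarith [mul_le_mul_of_nonneg_left hεpow
    (show (0:ℝ) ≤ 16*(1+t)^2 by positivity), sq_nonneg (1+t)]
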